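/- Let (Y,d) be a separable complete metric space with Borel σ-algebra F_Y. Let (Ω,F) be a measurable space, X : Ω → {0,1}, Y' : Ω → Y, U : Ω → [0,1] random variables, and P, Q probability measures on F with P[X=1] = p ∈ (0,1), Q[X=1] = q ∈ [0,1], U uniform under both P and Q, and U independent of X under both P and Q. If Q_{Y'} ≪ P_{Y'} and P_{Y'}-almost surely min(q/p, (1−q)/(1−p)) ≤ dQ_{Y'}/dP_{Y'} ≤ max(q/p, (1−q)/(1−p)), then there exists a measurable φ : {0,1}×[0,1] → Y such that P_{Y'} = P_{φ(X,U)} and Q_{Y'} = Q_{φ(X,U)}. -/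

import Mathlib

open MeasureTheory

section AuxOneBit1
open MeasureTheory ProbabilityTheory Set Filter Topology ENNReal

noncomputable section AuxOneBit

lemma aux_volIcc_prob : IsProbabilityMeasure (volume.restrict (Set.Icc (0:ℝ) 1)) :=
  ⟨by simp⟩

lemma aux_exists_map_uniform_real (m : Measure ℝ) [IsProbabilityMeasure m] :
    ∃ g : ℝ → ℝ, Measurable g ∧
      Measure.map g (volume.restrict (Set.Icc (0:ℝ) 1)) = m := by
  set F := ProbabilityTheory.cdf m with hF
  have hF_mono : Monotone F := ProbabilityTheory.monotone_cdf m
  have h0 : ∀ x, 0 ≤ F x := fun x => ProbabilityTheory.cdf_nonneg m x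
  have h1 : ∀ x, F x ≤ 1 := fun x => ProbabilityTheory.cdf_le_one m x
  have hne : ∀ u : ℝ, u < 1 → {x | u ≤ F x}.Nonempty := by
    intro u hu
    obtain ⟨x, hx⟩ := ((ProbabilityTheory.tendsto_cdf_atTop (μ := m)).eventually
      (eventually_ge_nhds hu)).exists
    exact ⟨x, hx⟩
  have hbdd : ∀ u : ℝ, 0 < u → BddBelow {x | u ≤ F x} := by
    intro u hu
    obtain ⟨x₀, hx₀⟩ := ((ProbabilityTheory.tendsto_cdf_atBot (μ := m)).eventually
      (eventually_lt_nhds hu)).exists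
    refine ⟨x₀, fun t ht => ?_⟩
    by_contra hlt
    push_neg at hlt
    exact absurd (le_trans ht (hF_mono hlt.le)) (not_le.mpr hx₀)
  have key : ∀ u : ℝ, 0 < u → u < 1 → ∀ x, (sInf {x | u ≤ F x} ≤ x ↔ u ≤ F x) := by
    intro u hu0 hu1 x
    constructor
    · intro h
      have hx' : ∀ y, x < y → u ≤ F y := by
        intro y hy
        obtain ⟨t, ht, hty⟩ := exists_lt_of_csInf_lt (hne u hu1) (lt_of_le_of_lt h hy)
        exact le_trans ht (hF_mono hty.le)
      have htd : Tendsto F (𝓝[>] x) (𝓝 (F x)) :=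
        (F.right_continuous x).mono_left (nhdsWithin_mono x Ioi_subset_Ici_self)
      exact ge_of_tendsto htd (eventually_nhdsWithin_of_forall fun y hy => hx' y hy)
    · intro h
      exact csInf_le (hbdd u hu0) h
  have hImeas : MeasurableSet (Set.Ioo (0:ℝ) 1) := measurableSet_Ioo
  set h : (Set.Ioo (0:ℝ) 1) → ℝ := fun u => sInf {x | (u:ℝ) ≤ F x} with hh
  have hmono : Monotone h := fun u v huv =>
    csInf_le_csInf (hbdd _ u.2.1) (hne _ v.2.2) (fun t ht => show ((u:ℝ)) ≤ F t from le_trans huv ht)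
  have hmeas : Measurable h := hmono.measurable
  obtain ⟨g, hg, hge⟩ :=
    (MeasurableEmbedding.subtype_coe hImeas).exists_measurable_extend hmeas (fun _ => ⟨(0:ℝ)⟩)
  refine ⟨g, hg, ?_⟩
  haveI := aux_volIcc_prob
  haveI : IsProbabilityMeasure (Measure.map g (volume.restrict (Set.Icc (0:ℝ) 1))) :=
    Measure.isProbabilityMeasure_map hg.aemeasurable
  refine Measure.ext_of_Iic _ _ fun x => ?_
  rw [Measure.map_apply hg measurableSet_Iic,
    Measure.restrict_apply (hg measurableSet_Iic), ← ProbabilityTheory.ofReal_cdf]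
  have e1 : volume (g ⁻¹' Iic x ∩ Set.Icc 0 1) = volume (g ⁻¹' Iic x ∩ Set.Ioo 0 1) := by
    apply le_antisymm
    · calc volume (g ⁻¹' Iic x ∩ Set.Icc 0 1)
          ≤ volume ((g ⁻¹' Iic x ∩ Set.Ioo 0 1) ∪ ({0, 1} : Set ℝ)) := by
            refine measure_mono fun t ht => ?_
            rcases ht with ⟨ht1, ht2, ht3⟩
            rcases eq_or_lt_of_le ht2 with h2 | h2
            · exact Or.inr (Or.inl h2.symm)
            rcases eq_or_lt_of_le ht3 with h3 | h3
            · exact Or.inr (Or.inr h3)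
            exact Or.inl ⟨ht1, h2, h3⟩
      _ ≤ volume (g ⁻¹' Iic x ∩ Set.Ioo 0 1) + volume ({0, 1} : Set ℝ) := measure_union_le _ _
      _ = volume (g ⁻¹' Iic x ∩ Set.Ioo 0 1) := by
            rw [Set.Countable.measure_zero (by simp : ({0,1} : Set ℝ).Countable) volume, add_zero]
    · exact measure_mono (inter_subset_inter_right _ Set.Ioo_subset_Icc_self)
  have e2 : g ⁻¹' Iic x ∩ Set.Ioo 0 1 = Iic (F x) ∩ Set.Ioo 0 1 := by
    ext u
    simp only [mem_inter_iff, mem_preimage, mem_Iic, and_congr_left_iff]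
    intro hu
    have hgu : g u = h ⟨u, hu⟩ := congrFun hge ⟨u, hu⟩
    rw [hgu]
    exact key u hu.1 hu.2 x
  have e3 : volume (Iic (F x) ∩ Set.Ioo 0 1) = ENNReal.ofReal (F x) := by
    rcases lt_or_eq_of_le (h1 x) with hx1 | hx1
    · have : Iic (F x) ∩ Set.Ioo 0 1 = Set.Ioc 0 (F x) := by
        ext u
        simp only [mem_inter_iff, mem_Iic, mem_Ioo, mem_Ioc]
        constructor
        · rintro ⟨hu1, hu2, hu3⟩; exact ⟨hu2, hu1⟩
        · rintro ⟨hu1, hu2⟩; exact ⟨hu2, hu1, lt_of_le_of_lt hu2 hx1⟩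
      rw [this, Real.volume_Ioc, sub_zero]
    · have : Iic (F x) ∩ Set.Ioo 0 1 = Set.Ioo 0 1 :=
        inter_eq_right.mpr fun u hu => by rw [mem_Iic, hx1]; exact hu.2.le
      rw [this]
      simp [Real.volume_Ioo, hx1]
  rw [e1, e2, e3]

end AuxOneBit

section AuxOneBit2
open MeasureTheory ProbabilityTheory Set Filter Topology ENNReal

lemma aux_exists_map_uniform {Z : Type*} [MeasurableSpace Z] [StandardBorelSpace Z]
    [Nonempty Z] (m : Measure Z) [IsProbabilityMeasure m] :
    ∃ g : ℝ → Z, Measurable g ∧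
      Measure.map g (volume.restrict (Set.Icc (0:ℝ) 1)) = m := by
  obtain ⟨e, he⟩ := MeasureTheory.exists_measurableEmbedding_real Z
  obtain ⟨r, hr, hre⟩ := he.exists_measurable_extend measurable_id (fun _ => inferInstance)
  haveI : IsProbabilityMeasure (Measure.map e m) :=
    Measure.isProbabilityMeasure_map he.measurable.aemeasurable
  obtain ⟨g, hg, hmap⟩ := aux_exists_map_uniform_real (Measure.map e m)
  refine ⟨r ∘ g, hr.comp hg, ?_⟩
  rw [← Measure.map_map hr hg, hmap, Measure.map_map hr he.measurable]
  have : r ∘ e = id := hre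
  rw [this, Measure.map_id]

lemma aux_exists_pair {Z : Type*} [MeasurableSpace Z]
    (μ ν : Measure Z) [IsProbabilityMeasure μ] [IsProbabilityMeasure ν]
    (p q : ℝ) (hp : p ∈ Set.Ioo (0:ℝ) 1) (hq : q ∈ Set.Icc (0:ℝ) 1)
    (hac : ν ≪ μ)
    (hrn : ∀ᵐ y ∂ μ, min (q / p) ((1 - q) / (1 - p)) ≤ (ν.rnDeriv μ y).toReal ∧
        (ν.rnDeriv μ y).toReal ≤ max (q / p) ((1 - q) / (1 - p))) :
    ∃ μ₁ μ₀ : Measure Z, IsProbabilityMeasure μ₁ ∧ IsProbabilityMeasure μ₀ ∧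
      ENNReal.ofReal p • μ₁ + ENNReal.ofReal (1 - p) • μ₀ = μ ∧
      ENNReal.ofReal q • μ₁ + ENNReal.ofReal (1 - q) • μ₀ = ν := by
  have hp0 : (0:ℝ) < p := hp.1
  have hp1 : p < 1 := hp.2
  have hp1' : (0:ℝ) < 1 - p := by linarith
  have hf_meas : Measurable (ν.rnDeriv μ) := Measure.measurable_rnDeriv ν μ
  have hlt : ∀ᵐ y ∂ μ, ν.rnDeriv μ y < ⊤ := Measure.rnDeriv_lt_top ν μ
  have hwd : μ.withDensity (ν.rnDeriv μ) = ν := Measure.withDensity_rnDeriv_eq ν μ hac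
  by_cases hpq : p = q
  · -- then ν = μ
    subst hpq
    have hmm : min (p / p) ((1 - p) / (1 - p)) = 1 ∧ max (p / p) ((1 - p) / (1 - p)) = 1 := by
      rw [div_self hp0.ne', div_self hp1'.ne']
      simp
    have hone : ν.rnDeriv μ =ᵐ[μ] fun _ => (1 : ℝ≥0∞) := by
      filter_upwards [hrn, hlt] with y hy hy'
      have h1 : (ν.rnDeriv μ y).toReal = 1 := by
        rw [hmm.1] at hy; rw [hmm.2] at hy; exact le_antisymm hy.2 hy.1
      rw [← ENNReal.ofReal_toReal hy'.ne, h1, ENNReal.ofReal_one]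
    have hνμ : ν = μ := by
      rw [← hwd, withDensity_congr_ae hone]
      exact withDensity_one
    refine ⟨μ, μ, inferInstance, inferInstance, ?_, ?_⟩ <;>
    · try rw [hνμ]
      rw [← add_smul, ← ENNReal.ofReal_add (by linarith) (by linarith),
        show p + (1 - p) = 1 by ring, ENNReal.ofReal_one, one_smul]
  · -- generic case
    set t : Z → ℝ := fun y => (ν.rnDeriv μ y).toReal with ht
    have ht_meas : Measurable t := hf_meas.ennreal_toReal
    set A : Z → ℝ := fun y => ((1 - q) - (1 - p) * t y) / (p - q) with hA
    set B : Z → ℝ := fun y => (p * t y - q) / (p - q) with hB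
    have hA_meas : Measurable A := (measurable_const.sub (measurable_const.mul ht_meas)).div_const _
    have hB_meas : Measurable B := ((measurable_const.mul ht_meas).sub measurable_const).div_const _
    set d₁ : Z → ℝ≥0∞ := fun y => ENNReal.ofReal (A y) with hd₁
    set d₀ : Z → ℝ≥0∞ := fun y => ENNReal.ofReal (B y) with hd₀
    have hd₁_meas : Measurable d₁ := hA_meas.ennreal_ofReal
    have hd₀_meas : Measurable d₀ := hB_meas.ennreal_ofReal
    -- a.e. nonnegativity
    have hAB : ∀ᵐ y ∂ μ, 0 ≤ A y ∧ 0 ≤ B y := by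
      filter_upwards [hrn] with y hy
      rcases lt_or_gt_of_ne hpq with hlt' | hgt'
      · -- p < q : min = (1-q)/(1-p), max = q/p
        have hminmax : min (q / p) ((1 - q) / (1 - p)) = (1 - q) / (1 - p) ∧
            max (q / p) ((1 - q) / (1 - p)) = q / p := by
          have : (1 - q) / (1 - p) ≤ q / p := by
            rw [div_le_div_iff₀ hp1' hp0]; nlinarith
          exact ⟨min_eq_right this, max_eq_left this⟩
        have h₁ : (1 - q) / (1 - p) ≤ t y := hminmax.1 ▸ hy.1
        have h₂ : t y ≤ q / p := hminmax.2 ▸ hy.2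
        have h₁' : 1 - q ≤ (1 - p) * t y := by
          rw [div_le_iff₀ hp1'] at h₁; linarith [h₁]
        have h₂' : p * t y ≤ q := by
          rw [le_div_iff₀ hp0] at h₂; linarith [h₂]
        constructor
        · exact div_nonneg_iff.mpr (Or.inr ⟨by linarith, by linarith⟩)
        · exact div_nonneg_iff.mpr (Or.inr ⟨by linarith, by linarith⟩)
      · -- q < p : min = q/p, max = (1-q)/(1-p)
        have hminmax : min (q / p) ((1 - q) / (1 - p)) = q / p ∧
            max (q / p) ((1 - q) / (1 - p)) = (1 - q) / (1 - p) := by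
          have : q / p ≤ (1 - q) / (1 - p) := by
            rw [div_le_div_iff₀ hp0 hp1']; nlinarith
          exact ⟨min_eq_left this, max_eq_right this⟩
        have h₁ : q / p ≤ t y := hminmax.1 ▸ hy.1
        have h₂ : t y ≤ (1 - q) / (1 - p) := hminmax.2 ▸ hy.2
        have h₁' : q ≤ p * t y := by
          rw [div_le_iff₀ hp0] at h₁; linarith [h₁]
        have h₂' : (1 - p) * t y ≤ 1 - q := by
          rw [le_div_iff₀ hp1'] at h₂; linarith [h₂]
        constructor
        · exact div_nonneg_iff.mpr (Or.inl ⟨by linarith, by linarith⟩)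
        · exact div_nonneg_iff.mpr (Or.inl ⟨by linarith, by linarith⟩)
    have hpq' : p - q ≠ 0 := sub_ne_zero.mpr hpq
    have hsum1 : ∀ y, p * A y + (1 - p) * B y = 1 := by
      intro y; rw [hA, hB]; field_simp; ring
    have hsum2 : ∀ y, q * A y + (1 - q) * B y = t y := by
      intro y; rw [hA, hB]; field_simp; ring
    have C1 : (fun y => ENNReal.ofReal p * d₁ y + ENNReal.ofReal (1 - p) * d₀ y)
        =ᵐ[μ] (fun _ => (1 : ℝ≥0∞)) := by
      filter_upwards [hAB] with y hy
      simp only [hd₁, hd₀]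
      rw [← ENNReal.ofReal_mul hp0.le, ← ENNReal.ofReal_mul hp1'.le,
        ← ENNReal.ofReal_add (mul_nonneg hp0.le hy.1) (mul_nonneg hp1'.le hy.2),
        hsum1 y, ENNReal.ofReal_one]
    have hq0 : (0:ℝ) ≤ q := hq.1
    have hq1 : (0:ℝ) ≤ 1 - q := by linarith [hq.2]
    have C2 : (fun y => ENNReal.ofReal q * d₁ y + ENNReal.ofReal (1 - q) * d₀ y)
        =ᵐ[μ] ν.rnDeriv μ := by
      filter_upwards [hAB, hlt] with y hy hy'
      simp only [hd₁, hd₀]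
      rw [← ENNReal.ofReal_mul hq0, ← ENNReal.ofReal_mul hq1,
        ← ENNReal.ofReal_add (mul_nonneg hq0 hy.1) (mul_nonneg hq1 hy.2),
        hsum2 y]
      exact ENNReal.ofReal_toReal hy'.ne
    have eq1 : ENNReal.ofReal p • μ.withDensity d₁
        + ENNReal.ofReal (1 - p) • μ.withDensity d₀ = μ := by
      rw [← withDensity_smul _ hd₁_meas, ← withDensity_smul _ hd₀_meas,
        ← withDensity_add_left (hd₁_meas.const_smul _)]
      calc μ.withDensity (ENNReal.ofReal p • d₁ + ENNReal.ofReal (1 - p) • d₀)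
          = μ.withDensity (fun _ => (1:ℝ≥0∞)) := withDensity_congr_ae C1
        _ = μ := withDensity_one
    have eq2 : ENNReal.ofReal q • μ.withDensity d₁
        + ENNReal.ofReal (1 - q) • μ.withDensity d₀ = ν := by
      rw [← withDensity_smul _ hd₁_meas, ← withDensity_smul _ hd₀_meas,
        ← withDensity_add_left (hd₁_meas.const_smul _)]
      calc μ.withDensity (ENNReal.ofReal q • d₁ + ENNReal.ofReal (1 - q) • d₀)
          = μ.withDensity (ν.rnDeriv μ) := withDensity_congr_ae C2
        _ = ν := hwd
    -- masses
    set a := μ.withDensity d₁ Set.univ with ha_def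
    set b := μ.withDensity d₀ Set.univ with hb_def
    have E1 : ENNReal.ofReal p * a + ENNReal.ofReal (1 - p) * b = 1 := by
      have h := congrArg (fun m : Measure Z => m Set.univ) eq1
      simp only [Measure.coe_add, Pi.add_apply, Measure.smul_apply, smul_eq_mul,
        measure_univ] at h
      exact h
    have E2 : ENNReal.ofReal q * a + ENNReal.ofReal (1 - q) * b = 1 := by
      have h := congrArg (fun m : Measure Z => m Set.univ) eq2
      simp only [Measure.coe_add, Pi.add_apply, Measure.smul_apply, smul_eq_mul,
        measure_univ] at h
      exact h
    have hpne : ENNReal.ofReal p ≠ 0 := (ENNReal.ofReal_pos.mpr hp0).ne'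
    have hp'ne : ENNReal.ofReal (1 - p) ≠ 0 := (ENNReal.ofReal_pos.mpr hp1').ne'
    have ha_ne : a ≠ ⊤ := by
      intro h
      rw [h, ENNReal.mul_top hpne] at E1
      simp at E1
    have hb_ne : b ≠ ⊤ := by
      intro h
      rw [h, ENNReal.mul_top hp'ne] at E1
      simp at E1
    have r1 : p * a.toReal + (1 - p) * b.toReal = 1 := by
      have h := congrArg ENNReal.toReal E1
      rwa [ENNReal.toReal_add (ENNReal.mul_ne_top ENNReal.ofReal_ne_top ha_ne)
          (ENNReal.mul_ne_top ENNReal.ofReal_ne_top hb_ne),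
        ENNReal.toReal_mul, ENNReal.toReal_mul, ENNReal.toReal_ofReal hp0.le,
        ENNReal.toReal_ofReal hp1'.le, ENNReal.toReal_one] at h
    have r2 : q * a.toReal + (1 - q) * b.toReal = 1 := by
      have h := congrArg ENNReal.toReal E2
      rwa [ENNReal.toReal_add (ENNReal.mul_ne_top ENNReal.ofReal_ne_top ha_ne)
          (ENNReal.mul_ne_top ENNReal.ofReal_ne_top hb_ne),
        ENNReal.toReal_mul, ENNReal.toReal_mul, ENNReal.toReal_ofReal hq0,
        ENNReal.toReal_ofReal hq1, ENNReal.toReal_one] at h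
    have hab : a.toReal = b.toReal := by
      have h0 : (p - q) * (a.toReal - b.toReal) = 0 := by linear_combination r1 - r2
      rcases mul_eq_zero.mp h0 with h | h
      · exact absurd (sub_eq_zero.mp h) hpq
      · exact sub_eq_zero.mp h
    have ha1 : a.toReal = 1 := by linear_combination r1 + (1 - p) * hab
    have hb1 : b.toReal = 1 := by linear_combination r1 - p * hab
    have haa : a = 1 := by
      rw [← ENNReal.ofReal_toReal ha_ne, ha1, ENNReal.ofReal_one]
    have hbb : b = 1 := by
      rw [← ENNReal.ofReal_toReal hb_ne, hb1, ENNReal.ofReal_one]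
    exact ⟨μ.withDensity d₁, μ.withDensity d₀, ⟨haa⟩, ⟨hbb⟩, eq1, eq2⟩
end AuxOneBit2

section AuxOneBit3
open MeasureTheory ProbabilityTheory Set Filter Topology ENNReal NNReal

lemma aux_smul_prod {α β : Type*} [MeasurableSpace α] [MeasurableSpace β]
    (c : ℝ≥0∞) (hc : c ≠ ⊤) (μ : Measure α) [SigmaFinite μ] (ν : Measure β) [SigmaFinite ν] :
    (c • μ).prod ν = c • (μ.prod ν) := by
  haveI : SigmaFinite (c • μ) := by
    lift c to ℝ≥0 using hc
    rw [← ENNReal.smul_def]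
    infer_instance
  refine Measure.prod_eq fun s t hs ht => ?_
  rw [Measure.smul_apply, Measure.prod_prod, Measure.smul_apply, smul_eq_mul,
    smul_eq_mul, mul_assoc]

lemma aux_bool_decomp (m : Measure Bool) [IsProbabilityMeasure m] (r : ℝ)
    (hr0 : 0 ≤ r) (hr1 : r ≤ 1) (h : m {true} = ENNReal.ofReal r) :
    m = ENNReal.ofReal r • Measure.dirac true
      + ENNReal.ofReal (1 - r) • Measure.dirac false := by
  have hcompl : ({true} : Set Bool)ᶜ = {false} := by
    ext b; cases b <;> simp
  have hfalse : m {false} = ENNReal.ofReal (1 - r) := by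
    rw [← hcompl, prob_compl_eq_one_sub (measurableSet_singleton true), h,
      ← ENNReal.ofReal_one, ← ENNReal.ofReal_sub _ hr0]
  refine Measure.ext_iff_singleton.mpr fun b => ?_
  cases b <;>
    simp [hfalse, h, Measure.smul_apply, Measure.dirac_apply' _ (measurableSet_singleton _)]

lemma aux_law_comp {Ω Z : Type*} [MeasurableSpace Ω] [MeasurableSpace Z]
    (R : Measure Ω) [IsProbabilityMeasure R]
    (X : Ω → Bool) (U : Ω → ℝ) (hX : Measurable X) (hU : Measurable U)
    (φ : Bool × ℝ → Z) (hφ : Measurable φ)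
    (g₁ g₀ : ℝ → Z) (h₁ : ∀ u, φ (true, u) = g₁ u) (h₀ : ∀ u, φ (false, u) = g₀ u)
    (r : ℝ) (hr0 : 0 ≤ r) (hr1 : r ≤ 1)
    (hRX : R {ω | X ω = true} = ENNReal.ofReal r)
    (hRU : Measure.map U R = volume.restrict (Set.Icc (0:ℝ) 1))
    (hRind : Measure.map (fun ω => (X ω, U ω)) R
      = (Measure.map X R).prod (Measure.map U R)) :
    Measure.map (fun ω => φ (X ω, U ω)) R
      = ENNReal.ofReal r • Measure.map g₁ (volume.restrict (Set.Icc (0:ℝ) 1))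
        + ENNReal.ofReal (1 - r) • Measure.map g₀ (volume.restrict (Set.Icc (0:ℝ) 1)) := by
  haveI := aux_volIcc_prob
  haveI : IsProbabilityMeasure (Measure.map X R) :=
    Measure.isProbabilityMeasure_map hX.aemeasurable
  have hXtrue : Measure.map X R {true} = ENNReal.ofReal r := by
    rw [Measure.map_apply hX (measurableSet_singleton true)]
    convert hRX using 2
    rfl
  have hpair : Measurable fun ω => (X ω, U ω) := hX.prodMk hU
  have hcomp : (fun ω => φ (X ω, U ω)) = φ ∘ fun ω => (X ω, U ω) := rfl
  rw [hcomp, ← Measure.map_map hφ hpair, hRind, hRU,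
    aux_bool_decomp (Measure.map X R) r hr0 hr1 hXtrue, Measure.add_prod,
    aux_smul_prod _ ENNReal.ofReal_ne_top, aux_smul_prod _ ENNReal.ofReal_ne_top, Measure.dirac_prod, Measure.dirac_prod,
    Measure.map_add _ _ hφ, Measure.map_smul, Measure.map_smul,
    Measure.map_map hφ measurable_prodMk_left, Measure.map_map hφ measurable_prodMk_left]
  have e₁ : φ ∘ Prod.mk true = g₁ := funext h₁
  have e₀ : φ ∘ Prod.mk false = g₀ := funext h₀
  rw [e₁, e₀]

end AuxOneBit3

end AuxOneBit1

/-- One-bit/two-scenarios inverse-transformation representability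
(the implication (2) ⇒ (1) of the paper's Theorem): if the law of Y' under Q is
absolutely continuous w.r.t. its law under P with Radon–Nikodym derivative pinched
between min(q/p,(1−q)/(1−p)) and max(q/p,(1−q)/(1−p)), then Y' can be simulated
(in law, under both P and Q) by a measurable function of the bit X and the
independent uniform seed U. -/
theorem one_bit_two_scenarios_representation
    {Ω : Type*} [MeasurableSpace Ω]
    {Y : Type*} [MetricSpace Y] [TopologicalSpace.SeparableSpace Y] [CompleteSpace Y]
    [MeasurableSpace Y] [BorelSpace Y]
    (P Q : Measure Ω) [IsProbabilityMeasure P] [IsProbabilityMeasure Q]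
    (X : Ω → Bool) (Y' : Ω → Y) (U : Ω → ℝ)
    (hX : Measurable X) (hY' : Measurable Y') (hU : Measurable U)
    (p q : ℝ) (hp : p ∈ Set.Ioo (0:ℝ) 1) (hq : q ∈ Set.Icc (0:ℝ) 1)
    (hPX : P {ω | X ω = true} = ENNReal.ofReal p)
    (hQX : Q {ω | X ω = true} = ENNReal.ofReal q)
    (hPU : Measure.map U P = volume.restrict (Set.Icc (0:ℝ) 1))
    (hQU : Measure.map U Q = volume.restrict (Set.Icc (0:ℝ) 1))
    (hPind : Measure.map (fun ω => (X ω, U ω)) P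
      = (Measure.map X P).prod (Measure.map U P))
    (hQind : Measure.map (fun ω => (X ω, U ω)) Q
      = (Measure.map X Q).prod (Measure.map U Q))
    (hac : Measure.map Y' Q ≪ Measure.map Y' P)
    (hrn : ∀ᵐ y ∂ (Measure.map Y' P),
      min (q / p) ((1 - q) / (1 - p))
          ≤ ((Measure.map Y' Q).rnDeriv (Measure.map Y' P) y).toReal ∧
        ((Measure.map Y' Q).rnDeriv (Measure.map Y' P) y).toReal
          ≤ max (q / p) ((1 - q) / (1 - p))) :
    ∃ φ : Bool × ℝ → Y, Measurable φ ∧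
      Measure.map Y' P = Measure.map (fun ω => φ (X ω, U ω)) P ∧
      Measure.map Y' Q = Measure.map (fun ω => φ (X ω, U ω)) Q := by
  haveI : IsProbabilityMeasure (Measure.map Y' P) :=
    Measure.isProbabilityMeasure_map hY'.aemeasurable
  haveI : IsProbabilityMeasure (Measure.map Y' Q) :=
    Measure.isProbabilityMeasure_map hY'.aemeasurable
  haveI hne : Nonempty Y := by
    by_contra h
    rw [not_nonempty_iff] at h
    have huniv : (Measure.map Y' P) Set.univ = 1 := measure_univ
    rw [Set.univ_eq_empty_iff.mpr h, measure_empty] at huniv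
    exact zero_ne_one huniv
  haveI : StandardBorelSpace Y := inferInstance
  obtain ⟨μ₁, μ₀, h₁p, h₀p, heqP, heqQ⟩ :=
    aux_exists_pair (Measure.map Y' P) (Measure.map Y' Q) p q hp hq hac hrn
  haveI := h₁p
  haveI := h₀p
  obtain ⟨g₁, hg₁, hm₁⟩ := aux_exists_map_uniform μ₁
  obtain ⟨g₀, hg₀, hm₀⟩ := aux_exists_map_uniform μ₀
  set φ : Bool × ℝ → Y := fun z => if z.1 = true then g₁ z.2 else g₀ z.2 with hφdef
  have hφ : Measurable φ := by
    refine Measurable.ite ?_ (hg₁.comp measurable_snd) (hg₀.comp measurable_snd)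
    exact measurable_fst (measurableSet_singleton true)
  refine ⟨φ, hφ, ?_, ?_⟩
  · rw [aux_law_comp P X U hX hU φ hφ g₁ g₀ (fun u => rfl) (fun u => rfl) p hp.1.le hp.2.le
      hPX hPU hPind, hm₁, hm₀, heqP]
  · rw [aux_law_comp Q X U hX hU φ hφ g₁ g₀ (fun u => rfl) (fun u => rfl) q hq.1 hq.2
      hQX hQU hQind, hm₁, hm₀, heqQ]
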